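/- arXiv:2311.13030 — 3 statements merged into one kernel-verified Lean document; each statement's English description precedes it below -/
import Mathlib

section
/- Define θ̃(z,a) = θ(z−a)/θ(−a) and, for parameters p, q, x, the 2×2 matrix M with entries A = θ̃(t, −p+x+q), B = −θ̃(t, p+x+q), C = θ̃(t, −p+x−q), D = −θ̃(t, p+x−q), viewed as functions of t. Then the determinant AD − BC, as a function of t, equals L(p,q,x)·θ(t)·θ(t−2x), where L(p,q,x) = −θ(2p)θ(2q) / (θ(p−x−q)θ(q−x−p)θ(p+q+x)θ(p+q−x)). -/
open Complex

/-- Membership in the lattice `Λ = ℤ + ℤτ`. -/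
def InLattice (τ z : ℂ) : Prop := ∃ m n : ℤ, z = (m : ℂ) + (n : ℂ) * τ


private lemma periodic_int_shift {H : ℂ → ℂ} {c : ℂ}
    (h : ∀ s, H (s + c) = H s) : ∀ (m : ℤ) (s : ℂ), H (s + (m : ℂ) * c) = H s := by
  intro m
  induction m using Int.induction_on with
  | zero => intro s; simp
  | succ k ih =>
      intro s
      have e : s + (((k : ℤ) + 1 : ℤ) : ℂ) * c = (s + ((k : ℤ) : ℂ) * c) + c := by push_cast; ring
      rw [e, h]
      exact ih s
  | pred k ih =>
      intro s
      have e : (s + ((-(k : ℤ) - 1 : ℤ) : ℂ) * c) + c = s + ((-(k : ℤ) : ℤ) : ℂ) * c := by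
        push_cast; ring
      have h2 := h (s + ((-(k : ℤ) - 1 : ℤ) : ℂ) * c)
      rw [e] at h2
      rw [← h2]
      exact ih s

private lemma elliptic_ratio_zero
    (τ : ℂ) (hτ : 0 < τ.im)
    (G D c : ℂ → ℂ) (hG : Differentiable ℂ G) (hD : Differentiable ℂ D)
    (hc : Differentiable ℂ c) (hcne : ∀ s, c s ≠ 0)
    (hG1 : ∀ s, G (s + 1) = G s) (hD1 : ∀ s, D (s + 1) = D s)
    (hGτ : ∀ s, G (s + τ) = c s * G s) (hDτ : ∀ s, D (s + τ) = c s * D s)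
    (hzero : ∀ s, D s = 0 → G s = 0)
    (hder : ∀ s, D s = 0 → deriv D s ≠ 0)
    (u : ℂ) (hDu : D u ≠ 0) (hGu : G u = 0) :
    ∀ s, G s = 0 := by
  classical
  set H : ℂ → ℂ := fun s => if D s = 0 then deriv G s / deriv D s else G s / D s with hHdef
  have hHdiff : Differentiable ℂ H := by
    intro s₀
    by_cases h0 : D s₀ = 0
    · have hne : ∀ᶠ z in nhdsWithin s₀ {s₀}ᶜ, D z ≠ 0 := by
        rcases (hD.analyticAt s₀).eventually_eq_zero_or_eventually_ne_zero with h | h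
        · exfalso
          apply hder s₀ h0
          have h2 : deriv D s₀ = deriv (fun _ => (0 : ℂ)) s₀ := Filter.EventuallyEq.deriv_eq h
          simpa using h2
        · exact h
      have hGs₀ : G s₀ = 0 := hzero s₀ h0
      have key : H =ᶠ[nhds s₀] fun z => dslope G s₀ z / dslope D s₀ z := by
        have hne' : ∀ᶠ z in nhds s₀, z ∈ ({s₀}ᶜ : Set ℂ) → D z ≠ 0 :=
          eventually_nhdsWithin_iff.mp hne
        filter_upwards [hne'] with z hz
        by_cases hzs : z = s₀
        · subst hzs
          simp [hHdef, h0, dslope_same]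
        · have hDz : D z ≠ 0 := hz hzs
          have hzz : z - s₀ ≠ 0 := sub_ne_zero.mpr hzs
          simp only [hHdef, if_neg hDz, dslope_of_ne _ hzs, slope_def_field, hGs₀, h0, sub_zero]
          field_simp
      have hda : DifferentiableAt ℂ (fun z => dslope G s₀ z / dslope D s₀ z) s₀ := by
        obtain ⟨pG, hpG⟩ := hG.analyticAt s₀
        obtain ⟨pD, hpD⟩ := hD.analyticAt s₀
        have h1 : AnalyticAt ℂ (dslope G s₀) s₀ :=
          (hpG.has_fpower_series_dslope_fslope).analyticAt
        have h2 : AnalyticAt ℂ (dslope D s₀) s₀ :=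
          (hpD.has_fpower_series_dslope_fslope).analyticAt
        have h3 : dslope D s₀ s₀ ≠ 0 := by rw [dslope_same]; exact hder s₀ h0
        exact h1.differentiableAt.div h2.differentiableAt h3
      exact key.differentiableAt_iff.mpr hda
    · have hne : ∀ᶠ z in nhds s₀, D z ≠ 0 := hD.continuous.continuousAt.eventually_ne h0
      have key : H =ᶠ[nhds s₀] fun z => G z / D z := by
        filter_upwards [hne] with z hz
        simp [hHdef, hz]
      exact key.differentiableAt_iff.mpr (hG.differentiableAt.div hD.differentiableAt h0)
  -- periodicity in 1
  have hderG1 : ∀ s, deriv G (s + 1) = deriv G s := by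
    intro s
    have e : (fun z => G (z + 1)) = G := funext hG1
    rw [← deriv_comp_add_const G 1 s, e]
  have hderD1 : ∀ s, deriv D (s + 1) = deriv D s := by
    intro s
    have e : (fun z => D (z + 1)) = D := funext hD1
    rw [← deriv_comp_add_const D 1 s, e]
  have hH1 : ∀ s, H (s + 1) = H s := by
    intro s
    by_cases h0 : D s = 0
    · have h0' : D (s + 1) = 0 := by rw [hD1, h0]
      simp only [hHdef, if_pos h0, if_pos h0', hderG1, hderD1]
    · have h0' : D (s + 1) ≠ 0 := by rw [hD1]; exact h0
      simp only [hHdef, if_neg h0, if_neg h0', hG1, hD1]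
  -- periodicity in τ
  have hderGτ : ∀ s, D s = 0 → deriv G (s + τ) = c s * deriv G s := by
    intro s h0
    have e : (fun z => G (z + τ)) = fun z => c z * G z := funext hGτ
    rw [← deriv_comp_add_const G τ s, e,
      deriv_fun_mul hc.differentiableAt hG.differentiableAt, hzero s h0, mul_zero, zero_add]
  have hderDτ : ∀ s, D s = 0 → deriv D (s + τ) = c s * deriv D s := by
    intro s h0
    have e : (fun z => D (z + τ)) = fun z => c z * D z := funext hDτ
    rw [← deriv_comp_add_const D τ s, e,
      deriv_fun_mul hc.differentiableAt hD.differentiableAt, h0, mul_zero, zero_add]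
  have hHτ : ∀ s, H (s + τ) = H s := by
    intro s
    by_cases h0 : D s = 0
    · have h0' : D (s + τ) = 0 := by rw [hDτ, h0, mul_zero]
      simp only [hHdef, if_pos h0, if_pos h0', hderGτ s h0, hderDτ s h0]
      rw [mul_div_mul_left _ _ (hcne s)]
    · have h0' : D (s + τ) ≠ 0 := by rw [hDτ]; exact mul_ne_zero (hcne s) h0
      simp only [hHdef, if_neg h0, if_neg h0', hGτ, hDτ]
      rw [mul_div_mul_left _ _ (hcne s)]
  -- lattice periodicity
  have hH1' : ∀ s : ℂ, H (s + (1 : ℂ)) = H s := hH1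
  have hHshift : ∀ (m n : ℤ) (s : ℂ), H (s + ((m : ℂ) + (n : ℂ) * τ)) = H s := by
    intro m n s
    have e : s + ((m : ℂ) + (n : ℂ) * τ) = (s + (n : ℂ) * τ) + (m : ℂ) * 1 := by ring
    rw [e, periodic_int_shift hH1' m, periodic_int_shift hHτ n]
  -- boundedness
  have hτ0 : τ.im ≠ 0 := ne_of_gt hτ
  set K : Set ℂ := (fun ab : ℝ × ℝ => (ab.1 : ℂ) + (ab.2 : ℂ) * τ) ''
    (Set.Icc (0 : ℝ) 1 ×ˢ Set.Icc (0 : ℝ) 1) with hKdef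
  have hKcomp : IsCompact K := by
    apply (isCompact_Icc.prod isCompact_Icc).image
    continuity
  have hrange : Set.range H ⊆ H '' K := by
    rintro _ ⟨s, rfl⟩
    set b : ℝ := s.im / τ.im with hbdef
    set a : ℝ := s.re - b * τ.re with hadef
    have hs : s = (a : ℂ) + (b : ℂ) * τ := by
      apply Complex.ext
      · simp [hadef]
      · simp [hbdef]
        field_simp
    set m : ℤ := ⌊a⌋ with hmdef
    set n : ℤ := ⌊b⌋ with hndef
    have hk : s = (((Int.fract a : ℝ) : ℂ) + ((Int.fract b : ℝ) : ℂ) * τ) + ((m : ℂ) + (n : ℂ) * τ) := by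
      rw [hs]
      have ha' : ((Int.fract a : ℝ) : ℂ) = (a : ℂ) - (m : ℂ) := by
        rw [hmdef]; push_cast [Int.fract]; ring
      have hb' : ((Int.fract b : ℝ) : ℂ) = (b : ℂ) - (n : ℂ) := by
        rw [hndef]; push_cast [Int.fract]; ring
      rw [ha', hb']; ring
    refine ⟨((Int.fract a : ℝ) : ℂ) + ((Int.fract b : ℝ) : ℂ) * τ,
      ⟨⟨Int.fract a, Int.fract b⟩,
        ⟨⟨Int.fract_nonneg a, (Int.fract_lt_one a).le⟩,
          ⟨Int.fract_nonneg b, (Int.fract_lt_one b).le⟩⟩, rfl⟩, ?_⟩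
    rw [hk, hHshift]
  have hbdd : Bornology.IsBounded (Set.range H) :=
    ((hKcomp.image hHdiff.continuous).isBounded).subset hrange
  have hHu : H u = 0 := by
    simp only [hHdef, if_neg hDu, hGu, zero_div]
  intro s
  have hconst : H s = H u := hHdiff.apply_eq_apply_of_bounded hbdd s u
  rw [hHu] at hconst
  by_cases h0 : D s = 0
  · exact hzero s h0
  · have hq : G s / D s = 0 := by
      have := hconst
      simpa only [hHdef, if_neg h0] using this
    rcases div_eq_zero_iff.mp hq with h | h
    · exact h
    · exact absurd h h0

private lemma theta_shift_int (θ : ℂ → ℂ) (hθ1 : ∀ z, θ (z + 1) = -θ z) :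
    ∀ (m : ℤ) (z : ℂ), θ (z + (m : ℂ)) = (-1 : ℂ) ^ m * θ z := by
  intro m
  induction m using Int.induction_on with
  | zero => intro z; simp
  | succ k ih =>
      intro z
      have e : z + (((k : ℤ) + 1 : ℤ) : ℂ) = (z + ((k : ℤ) : ℂ)) + 1 := by push_cast; ring
      rw [e, hθ1, ih]
      rw [zpow_add_one₀ (by norm_num : (-1 : ℂ) ≠ 0)]
      ring
  | pred k ih =>
      intro z
      have e : (z + ((-(k : ℤ) - 1 : ℤ) : ℂ)) + 1 = z + ((-(k : ℤ) : ℤ) : ℂ) := by push_cast; ring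
      have h2 := hθ1 (z + ((-(k : ℤ) - 1 : ℤ) : ℂ))
      rw [e, ih] at h2
      have : θ (z + ((-(k : ℤ) - 1 : ℤ) : ℂ)) = -((-1 : ℂ) ^ (-(k : ℤ)) * θ z) := by
        linear_combination h2
      rw [this, zpow_sub_one₀ (by norm_num : (-1 : ℂ) ≠ 0)]
      ring

private lemma theta_shift_tau (τ : ℂ) (θ : ℂ → ℂ)
    (hθτ : ∀ z, θ (z + τ) = -Complex.exp (-(Real.pi : ℂ) * Complex.I * (τ + 2 * z)) * θ z) :
    ∀ (n : ℤ) (z : ℂ), θ (z + (n : ℂ) * τ) =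
      (-1 : ℂ) ^ n *
        Complex.exp (-(Real.pi : ℂ) * Complex.I * ((n : ℂ) ^ 2 * τ + 2 * (n : ℂ) * z)) * θ z := by
  intro n
  induction n using Int.induction_on with
  | zero => intro z; norm_num
  | succ k ih =>
      intro z
      have e : z + (((k : ℤ) + 1 : ℤ) : ℂ) * τ = (z + ((k : ℤ) : ℂ) * τ) + τ := by push_cast; ring
      rw [e, hθτ, ih]
      have he : Complex.exp (-(Real.pi : ℂ) * Complex.I * (τ + 2 * (z + ((k : ℤ) : ℂ) * τ))) *
          Complex.exp (-(Real.pi : ℂ) * Complex.I *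
            (((k : ℤ) : ℂ) ^ 2 * τ + 2 * ((k : ℤ) : ℂ) * z)) =
          Complex.exp (-(Real.pi : ℂ) * Complex.I *
            (((((k : ℤ) + 1 : ℤ)) : ℂ) ^ 2 * τ + 2 * ((((k : ℤ) + 1 : ℤ)) : ℂ) * z)) := by
        rw [← Complex.exp_add]
        congr 1
        push_cast
        ring
      rw [zpow_add_one₀ (by norm_num : (-1 : ℂ) ≠ 0)]
      set ε := (-1 : ℂ) ^ (k : ℤ) with hε
      linear_combination (-ε * θ z) * he
  | pred k ih =>
      intro z
      have e : (z + ((-(k : ℤ) - 1 : ℤ) : ℂ) * τ) + τ = z + ((-(k : ℤ) : ℤ) : ℂ) * τ := by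
        push_cast; ring
      have h2 := hθτ (z + ((-(k : ℤ) - 1 : ℤ) : ℂ) * τ)
      rw [e, ih] at h2
      have he : Complex.exp (-(Real.pi : ℂ) * Complex.I *
            (τ + 2 * (z + ((-(k : ℤ) - 1 : ℤ) : ℂ) * τ))) *
          Complex.exp (-(Real.pi : ℂ) * Complex.I *
            (((-(k : ℤ) - 1 : ℤ) : ℂ) ^ 2 * τ + 2 * ((-(k : ℤ) - 1 : ℤ) : ℂ) * z)) =
          Complex.exp (-(Real.pi : ℂ) * Complex.I *
            (((-(k : ℤ) : ℤ) : ℂ) ^ 2 * τ + 2 * ((-(k : ℤ) : ℤ) : ℂ) * z)) := by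
        rw [← Complex.exp_add]
        congr 1
        push_cast
        ring
      have hA : Complex.exp (-(Real.pi : ℂ) * Complex.I *
          (τ + 2 * (z + ((-(k : ℤ) - 1 : ℤ) : ℂ) * τ))) ≠ 0 := Complex.exp_ne_zero _
      apply mul_left_cancel₀ (neg_ne_zero.mpr hA)
      have hsgn : (-1 : ℂ) ^ (-(k : ℤ) - 1 : ℤ) = (-1 : ℂ) ^ (-(k : ℤ)) * (-1 : ℂ)⁻¹ :=
        zpow_sub_one₀ (by norm_num : (-1 : ℂ) ≠ 0) _
      rw [hsgn]
      set ε := (-1 : ℂ) ^ (-(k : ℤ)) with hε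
      linear_combination -h2 - (ε * θ z) * he

private lemma theta_pair_shift (τ : ℂ) (θ : ℂ → ℂ)
    (hθ1 : ∀ z, θ (z + 1) = -θ z)
    (hθτ : ∀ z, θ (z + τ) = -Complex.exp (-(Real.pi : ℂ) * Complex.I * (τ + 2 * z)) * θ z)
    (m n : ℤ) (z a : ℂ) :
    θ (z + ((m : ℂ) + (n : ℂ) * τ) + a) * θ (z + ((m : ℂ) + (n : ℂ) * τ) - a) =
      Complex.exp (-(Real.pi : ℂ) * Complex.I * (2 * (n : ℂ) ^ 2 * τ + 4 * (n : ℂ) * z)) *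
        (θ (z + a) * θ (z - a)) := by
  have key : ∀ y : ℂ, θ (y + ((m : ℂ) + (n : ℂ) * τ)) =
      (-1 : ℂ) ^ m * (-1 : ℂ) ^ n *
        Complex.exp (-(Real.pi : ℂ) * Complex.I * ((n : ℂ) ^ 2 * τ + 2 * (n : ℂ) * y)) * θ y := by
    intro y
    have e : y + ((m : ℂ) + (n : ℂ) * τ) = (y + (n : ℂ) * τ) + (m : ℂ) := by ring
    rw [e, theta_shift_int θ hθ1 m, theta_shift_tau τ θ hθτ n]
    ring
  have e1 : z + ((m : ℂ) + (n : ℂ) * τ) + a = (z + a) + ((m : ℂ) + (n : ℂ) * τ) := by ring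
  have e2 : z + ((m : ℂ) + (n : ℂ) * τ) - a = (z - a) + ((m : ℂ) + (n : ℂ) * τ) := by ring
  rw [e1, e2, key, key]
  have hε1 : (-1 : ℂ) ^ m * (-1 : ℂ) ^ m = 1 := by
    rw [← mul_zpow]; norm_num
  have hε2 : (-1 : ℂ) ^ n * (-1 : ℂ) ^ n = 1 := by
    rw [← mul_zpow]; norm_num
  have he : Complex.exp (-(Real.pi : ℂ) * Complex.I * ((n : ℂ) ^ 2 * τ + 2 * (n : ℂ) * (z + a))) *
      Complex.exp (-(Real.pi : ℂ) * Complex.I * ((n : ℂ) ^ 2 * τ + 2 * (n : ℂ) * (z - a))) =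
      Complex.exp (-(Real.pi : ℂ) * Complex.I * (2 * (n : ℂ) ^ 2 * τ + 4 * (n : ℂ) * z)) := by
    rw [← Complex.exp_add]; congr 1; ring
  set ε1 := (-1 : ℂ) ^ m
  set ε2 := (-1 : ℂ) ^ n
  linear_combination
    (ε1 * ε1 * ε2 * ε2 * θ (z + a) * θ (z - a)) * he +
    (ε1 * ε1 * Complex.exp (-(Real.pi : ℂ) * Complex.I *
        (2 * (n : ℂ) ^ 2 * τ + 4 * (n : ℂ) * z)) * θ (z + a) * θ (z - a)) * hε2 +
    (Complex.exp (-(Real.pi : ℂ) * Complex.I *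
        (2 * (n : ℂ) ^ 2 * τ + 4 * (n : ℂ) * z)) * θ (z + a) * θ (z - a)) * hε1

private lemma inlattice_sub {τ z1 z2 : ℂ} (h1 : InLattice τ z1) (h2 : InLattice τ z2) :
    InLattice τ (z1 - z2) := by
  obtain ⟨m1, n1, rfl⟩ := h1
  obtain ⟨m2, n2, rfl⟩ := h2
  exact ⟨m1 - m2, n1 - n2, by push_cast; ring⟩

private lemma weier_generic
    (τ : ℂ) (hτ : 0 < τ.im) (θ : ℂ → ℂ)
    (hθdiff : Differentiable ℂ θ)
    (hθodd : ∀ z, θ (-z) = -θ z)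
    (hθ1 : ∀ z, θ (z + 1) = -θ z)
    (hθτ : ∀ z, θ (z + τ) = -Complex.exp (-(Real.pi : ℂ) * Complex.I * (τ + 2 * z)) * θ z)
    (hθzero : ∀ z, θ z = 0 ↔ InLattice τ z)
    (hθsimple : ∀ z, InLattice τ z → deriv θ z ≠ 0)
    (u v w : ℂ)
    (h2w : ¬ InLattice τ (2 * w))
    (huw : ¬ InLattice τ (u + w)) (huw' : ¬ InLattice τ (u - w)) :
    ∀ s, (θ (s + u) * θ (s - u)) * (θ (v + w) * θ (v - w)) -
        (θ (s + v) * θ (s - v)) * (θ (u + w) * θ (u - w)) +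
        (θ (u + v) * θ (u - v)) * (θ (s + w) * θ (s - w)) = 0 := by
  have hθ0 : θ 0 = 0 := by
    have h := hθodd 0
    rw [neg_zero] at h
    linear_combination h / 2
  set G : ℂ → ℂ := fun s => (θ (s + u) * θ (s - u)) * (θ (v + w) * θ (v - w)) -
      (θ (s + v) * θ (s - v)) * (θ (u + w) * θ (u - w)) +
      (θ (u + v) * θ (u - v)) * (θ (s + w) * θ (s - w)) with hGdef
  set D : ℂ → ℂ := fun s => θ (s + w) * θ (s - w) with hDdef
  set c : ℂ → ℂ := fun s => Complex.exp (-(Real.pi : ℂ) * Complex.I * (2 * τ + 4 * s)) with hcdef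
  have hpa : ∀ a : ℂ, Differentiable ℂ (fun s => θ (s + a)) := fun a =>
    hθdiff.comp (differentiable_id.add_const a)
  have hps : ∀ a : ℂ, Differentiable ℂ (fun s => θ (s - a)) := fun a =>
    hθdiff.comp (differentiable_id.sub_const a)
  have hGdiff : Differentiable ℂ G := by
    rw [hGdef]; fun_prop
  have hDdiff : Differentiable ℂ D := by
    rw [hDdef]; fun_prop
  have hcdiff : Differentiable ℂ c := by
    rw [hcdef]; fun_prop
  have hcne : ∀ s : ℂ, c s ≠ 0 := fun s => Complex.exp_ne_zero _
  -- periodicity 1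
  have pair1 : ∀ z a : ℂ, θ (z + 1 + a) * θ (z + 1 - a) = θ (z + a) * θ (z - a) := by
    intro z a
    have e1 : z + 1 + a = (z + a) + 1 := by ring
    have e2 : z + 1 - a = (z - a) + 1 := by ring
    rw [e1, e2, hθ1, hθ1]
    ring
  have hG1 : ∀ s, G (s + 1) = G s := by
    intro s
    simp only [hGdef]
    rw [pair1 s u, pair1 s v, pair1 s w]
  have hD1 : ∀ s, D (s + 1) = D s := by
    intro s
    simp only [hDdef]
    rw [pair1 s w]
  -- periodicity τ
  have pairτ : ∀ z a : ℂ, θ (z + τ + a) * θ (z + τ - a) = c z * (θ (z + a) * θ (z - a)) := by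
    intro z a
    have e1 : z + τ + a = (z + a) + τ := by ring
    have e2 : z + τ - a = (z - a) + τ := by ring
    rw [e1, e2, hθτ, hθτ]
    have he : Complex.exp (-(Real.pi : ℂ) * Complex.I * (τ + 2 * (z + a))) *
        Complex.exp (-(Real.pi : ℂ) * Complex.I * (τ + 2 * (z - a))) = c z := by
      rw [hcdef, ← Complex.exp_add]
      congr 1
      ring
    linear_combination (θ (z + a) * θ (z - a)) * he
  have hGτ : ∀ s, G (s + τ) = c s * G s := by
    intro s
    simp only [hGdef]
    rw [pairτ s u, pairτ s v, pairτ s w]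
    ring
  have hDτ : ∀ s, D (s + τ) = c s * D s := by
    intro s
    simp only [hDdef]
    rw [pairτ s w]
  -- G vanishes at ±w mod Λ
  have hGshift : ∀ (m n : ℤ) (z : ℂ), G (z + ((m : ℂ) + (n : ℂ) * τ)) =
      Complex.exp (-(Real.pi : ℂ) * Complex.I * (2 * (n : ℂ) ^ 2 * τ + 4 * (n : ℂ) * z)) *
        G z := by
    intro m n z
    simp only [hGdef]
    rw [theta_pair_shift τ θ hθ1 hθτ m n z u, theta_pair_shift τ θ hθ1 hθτ m n z v,
      theta_pair_shift τ θ hθ1 hθτ m n z w]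
    ring
  have hGw : G w = 0 := by
    simp only [hGdef]
    rw [show w + u = u + w by ring, show w - u = -(u - w) by ring, hθodd,
      show w + v = v + w by ring, show w - v = -(v - w) by ring, hθodd,
      sub_self, hθ0]
    ring
  have hGw' : G (-w) = 0 := by
    simp only [hGdef]
    rw [show -w + u = u - w by ring, show -w - u = -(u + w) by ring, hθodd,
      show -w + v = v - w by ring, show -w - v = -(v + w) by ring, hθodd,
      show -w + w = 0 by ring, hθ0]
    ring
  have hzero : ∀ s, D s = 0 → G s = 0 := by
    intro s hs
    rcases mul_eq_zero.mp hs with h | h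
    · obtain ⟨m, n, hmn⟩ := (hθzero _).mp h
      have hs' : s = -w + ((m : ℂ) + (n : ℂ) * τ) := by linear_combination hmn
      rw [hs', hGshift, hGw', mul_zero]
    · obtain ⟨m, n, hmn⟩ := (hθzero _).mp h
      have hs' : s = w + ((m : ℂ) + (n : ℂ) * τ) := by linear_combination hmn
      rw [hs', hGshift, hGw, mul_zero]
  -- derivative of D at its zeros
  have hd : ∀ s : ℂ, deriv D s = deriv θ (s + w) * θ (s - w) + θ (s + w) * deriv θ (s - w) := by
    intro s
    rw [hDdef]
    rw [deriv_fun_mul ((hpa w).differentiableAt) ((hps w).differentiableAt),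
      deriv_comp_add_const, deriv_comp_sub_const]
  have hder : ∀ s, D s = 0 → deriv D s ≠ 0 := by
    intro s hs
    rcases mul_eq_zero.mp hs with h | h
    · have hmem : InLattice τ (s + w) := (hθzero _).mp h
      have h2 : θ (s - w) ≠ 0 := by
        intro hz
        have hmem2 := (hθzero _).mp hz
        apply h2w
        have := inlattice_sub hmem hmem2
        rwa [show s + w - (s - w) = 2 * w by ring] at this
      rw [hd s, h, zero_mul, add_zero]
      exact mul_ne_zero (hθsimple _ hmem) h2
    · have hmem : InLattice τ (s - w) := (hθzero _).mp h
      have h2 : θ (s + w) ≠ 0 := by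
        intro hz
        have hmem2 := (hθzero _).mp hz
        apply h2w
        have := inlattice_sub hmem2 hmem
        rwa [show s + w - (s - w) = 2 * w by ring] at this
      rw [hd s, h, mul_zero, zero_add]
      exact mul_ne_zero h2 (hθsimple _ hmem)
  -- evaluation point
  have hDu : D u ≠ 0 := by
    rw [hDdef]
    exact mul_ne_zero (fun h => huw ((hθzero _).mp h)) (fun h => huw' ((hθzero _).mp h))
  have hGu : G u = 0 := by
    simp only [hGdef]
    rw [sub_self, hθ0]
    ring
  have := elliptic_ratio_zero τ hτ G D c hGdiff hDdiff hcdiff hcne hG1 hD1 hGτ hDτ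
    hzero hder u hDu hGu
  intro s
  have hGs := this s
  simpa only [hGdef] using hGs

private lemma weier_all
    (τ : ℂ) (hτ : 0 < τ.im) (θ : ℂ → ℂ)
    (hθdiff : Differentiable ℂ θ)
    (hθodd : ∀ z, θ (-z) = -θ z)
    (hθ1 : ∀ z, θ (z + 1) = -θ z)
    (hθτ : ∀ z, θ (z + τ) = -Complex.exp (-(Real.pi : ℂ) * Complex.I * (τ + 2 * z)) * θ z)
    (hθzero : ∀ z, θ z = 0 ↔ InLattice τ z)
    (hθsimple : ∀ z, InLattice τ z → deriv θ z ≠ 0)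
    (s u v w : ℂ) :
    (θ (s + u) * θ (s - u)) * (θ (v + w) * θ (v - w)) -
      (θ (s + v) * θ (s - v)) * (θ (u + w) * θ (u - w)) +
      (θ (u + v) * θ (u - v)) * (θ (s + w) * θ (s - w)) = 0 := by
  have hθc : Continuous θ := hθdiff.continuous
  set f : ℂ → ℂ := fun w' => (θ (s + u) * θ (s - u)) * (θ (v + w') * θ (v - w')) -
      (θ (s + v) * θ (s - v)) * (θ (u + w') * θ (u - w')) +
      (θ (u + v) * θ (u - v)) * (θ (s + w') * θ (s - w')) with hfdef
  have hfc : Continuous f := by rw [hfdef]; fun_prop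
  have hL : {z : ℂ | InLattice τ z}.Countable := by
    have hsub : {z : ℂ | InLattice τ z} ⊆
        Set.range (fun p : ℤ × ℤ => ((p.1 : ℂ) + (p.2 : ℂ) * τ)) := by
      rintro z ⟨m, n, rfl⟩
      exact ⟨(m, n), rfl⟩
    exact (Set.countable_range _).mono hsub
  have hbad : {w' : ℂ | InLattice τ (2 * w') ∨ InLattice τ (u + w') ∨
      InLattice τ (u - w')}.Countable := by
    have c1 : {w' : ℂ | InLattice τ (2 * w')}.Countable := by
      apply (hL.image (fun z => z / 2)).mono
      rintro w' hw'
      exact ⟨2 * w', hw', by ring⟩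
    have c2 : {w' : ℂ | InLattice τ (u + w')}.Countable := by
      apply (hL.image (fun z => z - u)).mono
      rintro w' hw'
      exact ⟨u + w', hw', by ring⟩
    have c3 : {w' : ℂ | InLattice τ (u - w')}.Countable := by
      apply (hL.image (fun z => u - z)).mono
      rintro w' hw'
      exact ⟨u - w', hw', by ring⟩
    have : {w' : ℂ | InLattice τ (2 * w') ∨ InLattice τ (u + w') ∨ InLattice τ (u - w')} ⊆
        {w' : ℂ | InLattice τ (2 * w')} ∪ ({w' : ℂ | InLattice τ (u + w')} ∪
          {w' : ℂ | InLattice τ (u - w')}) := by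
      rintro w' (h | h | h)
      · exact Or.inl h
      · exact Or.inr (Or.inl h)
      · exact Or.inr (Or.inr h)
    exact ((c1.union (c2.union c3))).mono this
  have hdense : Dense {w' : ℂ | InLattice τ (2 * w') ∨ InLattice τ (u + w') ∨
      InLattice τ (u - w')}ᶜ := Set.Countable.dense_compl ℂ hbad
  have heq : Set.EqOn f (fun _ => 0) {w' : ℂ | InLattice τ (2 * w') ∨ InLattice τ (u + w') ∨
      InLattice τ (u - w')}ᶜ := by
    intro w' hw'
    simp only [Set.mem_compl_iff, Set.mem_setOf_eq, not_or] at hw'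
    obtain ⟨hw1, hw2, hw3⟩ := hw'
    exact weier_generic τ hτ θ hθdiff hθodd hθ1 hθτ hθzero hθsimple u v w' hw1 hw2 hw3 s
  have hfg : f = fun _ => 0 := Continuous.ext_on hdense hfc continuous_const heq
  have := congrFun hfg w
  simpa only [hfdef] using this

/-- with `θ̃(z,a) = θ(z-a)/θ(-a)` and
`A = θ̃(t,-p+x+q)`, `B = -θ̃(t,p+x+q)`, `C = θ̃(t,-p+x-q)`, `D = -θ̃(t,p+x-q)`,
the determinant `AD - BC` equals `L(p,q,x)·θ(t)·θ(t-2x)` as a function of `t`, where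
`L(p,q,x) = -θ(2p)θ(2q)/(θ(p-x-q)θ(q-x-p)θ(p+q+x)θ(p+q-x))`. -/
theorem determinant_theta_identity
    (τ : ℂ) (hτ : 0 < τ.im) (θ : ℂ → ℂ)
    (hθdiff : Differentiable ℂ θ)
    (hθodd : ∀ z, θ (-z) = -θ z)
    (hθ1 : ∀ z, θ (z + 1) = -θ z)
    (hθτ : ∀ z, θ (z + τ) = -Complex.exp (-(Real.pi : ℂ) * Complex.I * (τ + 2 * z)) * θ z)
    (hθzero : ∀ z, θ z = 0 ↔ InLattice τ z)
    (hθsimple : ∀ z, InLattice τ z → deriv θ z ≠ 0)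
    (p q x : ℂ)
    (h1 : ¬ InLattice τ (p + x + q)) (h2 : ¬ InLattice τ (p + x - q))
    (h3 : ¬ InLattice τ (p - x + q)) (h4 : ¬ InLattice τ (p - x - q))
    (h2p : ¬ InLattice τ (2 * p)) (h2q : ¬ InLattice τ (2 * q))
    (tθ : ℂ → ℂ → ℂ) (htθ : ∀ z a, tθ z a = θ (z - a) / θ (-a)) :
    ∀ t : ℂ,
      tθ t (-p + x + q) * (-tθ t (p + x - q)) - (-tθ t (p + x + q)) * tθ t (-p + x - q) =
      (-θ (2 * p) * θ (2 * q) /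
          (θ (p - x - q) * θ (q - x - p) * θ (p + q + x) * θ (p + q - x))) *
        θ t * θ (t - 2 * x) := by
  intro t
  -- nonvanishing of denominators
  have nb1 : θ (p + q + x) ≠ 0 := fun h => h1 (by
    have hm := (hθzero _).mp h
    rwa [show (p + q + x : ℂ) = p + x + q from by ring] at hm)
  have nb2 : θ (p + q - x) ≠ 0 := fun h => h3 (by
    have hm := (hθzero _).mp h
    rwa [show (p + q - x : ℂ) = p - x + q from by ring] at hm)
  have nb3 : θ (p - q + x) ≠ 0 := fun h => h2 (by
    have hm := (hθzero _).mp h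
    rwa [show (p - q + x : ℂ) = p + x - q from by ring] at hm)
  have nb4 : θ (p - q - x) ≠ 0 := fun h => h4 (by
    have hm := (hθzero _).mp h
    rwa [show (p - q - x : ℂ) = p - x - q from by ring] at hm)
  have W := weier_all τ hτ θ hθdiff hθodd hθ1 hθτ hθzero hθsimple (t - x) (p - q) (p + q) x
  rw [show t - x + (p - q) = t - (-p + x + q) from by ring,
    show t - x - (p - q) = t - (p + x - q) from by ring,
    show t - x + (p + q) = t - (-p + x - q) from by ring,
    show t - x - (p + q) = t - (p + x + q) from by ring,
    show p - q + (p + q) = 2 * p from by ring,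
    show p - q - (p + q) = -(2 * q) from by ring, hθodd (2 * q),
    show t - x + x = t from by ring,
    show t - x - x = t - 2 * x from by ring] at W
  rw [htθ, htθ, htθ, htθ,
    show -(-p + x + q) = p - q - x from by ring,
    show -(p + x - q) = -(p - q + x) from by ring, hθodd (p - q + x),
    show -(p + x + q) = -(p + q + x) from by ring, hθodd (p + q + x),
    show -(-p + x - q) = p + q - x from by ring,
    show p - x - q = p - q - x from by ring,
    show q - x - p = -(p - q + x) from by ring, hθodd (p - q + x)]
  field_simp
  rw [show p * 2 = 2 * p by ring, show q * 2 = 2 * q by ring, show x * 2 = 2 * x by ring]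
  linear_combination W
end

section
/- Let H be a Hilbert space of the form L²(X, L²(Y)) and let H₀ be a bounded operator on L²(X) with nonnegative integral kernel K(p,q) ≥ 0. Suppose (U_{p,q}) is a measurable family of unitary operators on L²(Y), and define H₁ on L²(X × Y) by (H₁f)(p) = ∫_X U_{p,q} f(q) K(p,q) dq. Then H₁ is a bounded operator with ‖H₁‖ ≤ ‖H₀‖. -/
open MeasureTheory

/-- if `H₀` is a bounded operator on `L²(X)` with nonnegative kernel `K`,
`(U_{p,q})` a measurable family of unitaries on `L²(Y)`, and `H₁` acts on
`L²(X; L²(Y)) ≅ L²(X×Y)` by `(H₁f)(p) = ∫ U_{p,q} f(q) K(p,q) dq`, then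
`H₁` is bounded with `‖H₁‖ ≤ ‖H₀‖`. -/
theorem hecke_operator_bounded
    {X Y : Type*} [MeasurableSpace X] [MeasurableSpace Y]
    (μ : Measure X) (ν : Measure Y) [SigmaFinite μ] [SigmaFinite ν]
    (K : X → X → ℝ) (hK : ∀ p q, 0 ≤ K p q)
    (H₀ : Lp ℂ 2 μ →L[ℂ] Lp ℂ 2 μ)
    (hH₀ : ∀ F : Lp ℂ 2 μ, ∀ᵐ p ∂μ,
      (H₀ F : X → ℂ) p = ∫ q, (K p q : ℂ) * (F : X → ℂ) q ∂μ)
    (U : X → X → (Lp ℂ 2 ν →L[ℂ] Lp ℂ 2 ν))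
    (hUiso : ∀ p q v, ‖U p q v‖ = ‖v‖)
    (hUsurj : ∀ p q, Function.Surjective (U p q))
    (hUmeas : ∀ p, AEStronglyMeasurable (fun q => U p q) μ)
    (H₁ : Lp (Lp ℂ 2 ν) 2 μ →ₗ[ℂ] Lp (Lp ℂ 2 ν) 2 μ)
    (hH₁ : ∀ f : Lp (Lp ℂ 2 ν) 2 μ, ∀ᵐ p ∂μ,
      (H₁ f : X → Lp ℂ 2 ν) p = ∫ q, (K p q : ℂ) • (U p q) ((f : X → Lp ℂ 2 ν) q) ∂μ) :
    ∀ f, ‖H₁ f‖ ≤ ‖H₀‖ * ‖f‖ := by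
  intro f
  have hf_meas := Lp.aestronglyMeasurable f
  have hg0 : MemLp (fun q => ((‖(f : X → Lp ℂ 2 ν) q‖ : ℝ) : ℂ)) 2 μ := by
    constructor
    · exact Complex.continuous_ofReal.comp_aestronglyMeasurable hf_meas.norm
    · have : eLpNorm (fun q => ((‖(f : X → Lp ℂ 2 ν) q‖ : ℝ) : ℂ)) 2 μ
          = eLpNorm (f : X → Lp ℂ 2 ν) 2 μ := by
        apply eLpNorm_congr_norm_ae
        filter_upwards with q
        simp
      rw [this]
      exact Lp.eLpNorm_lt_top f
  set g := hg0.toLp _ with hg_def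
  have hgf : ‖g‖ = ‖f‖ := by
    rw [Lp.norm_def, Lp.norm_def]
    congr 1
    rw [eLpNorm_congr_ae hg0.coeFn_toLp]
    apply eLpNorm_congr_norm_ae
    filter_upwards with q
    simp
  have key : ∀ᵐ p ∂μ, ‖(H₁ f : X → Lp ℂ 2 ν) p‖ ≤ ‖(H₀ g : X → ℂ) p‖ := by
    filter_upwards [hH₁ f, hH₀ g] with p h1 h0
    rw [h1, h0]
    have hgq : ∀ᵐ q ∂μ, (K p q : ℂ) * (g : X → ℂ) q
        = (K p q : ℂ) * ((‖(f : X → Lp ℂ 2 ν) q‖ : ℝ) : ℂ) :=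
      hg0.coeFn_toLp.mono fun q hq => by rw [hq]
    rw [integral_congr_ae hgq]
    calc ‖∫ q, (K p q : ℂ) • U p q ((f : X → Lp ℂ 2 ν) q) ∂μ‖
        ≤ ∫ q, ‖(K p q : ℂ) • U p q ((f : X → Lp ℂ 2 ν) q)‖ ∂μ :=
          norm_integral_le_integral_norm _
      _ = ∫ q, K p q * ‖(f : X → Lp ℂ 2 ν) q‖ ∂μ := by
          apply integral_congr_ae
          filter_upwards with q
          rw [norm_smul, hUiso]
          simp [abs_of_nonneg (hK p q)]
      _ ≤ ‖∫ q, (K p q : ℂ) * ((‖(f : X → Lp ℂ 2 ν) q‖ : ℝ) : ℂ) ∂μ‖ := by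
          have hco : ∫ q, (K p q : ℂ) * ((‖(f : X → Lp ℂ 2 ν) q‖ : ℝ) : ℂ) ∂μ
              = ((∫ q, K p q * ‖(f : X → Lp ℂ 2 ν) q‖ ∂μ : ℝ) : ℂ) := by
            have : (fun q => (K p q : ℂ) * ((‖(f : X → Lp ℂ 2 ν) q‖ : ℝ) : ℂ))
                = fun q => ((K p q * ‖(f : X → Lp ℂ 2 ν) q‖ : ℝ) : ℂ) := by
              funext q; push_cast; ring
            rw [this]; exact integral_ofReal
          rw [hco, Complex.norm_real, Real.norm_eq_abs]
          exact le_abs_self _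
  have h1 : ‖H₁ f‖ ≤ ‖H₀ g‖ := by
    rw [Lp.norm_def, Lp.norm_def]
    refine ENNReal.toReal_mono (Lp.eLpNorm_ne_top _) ?_
    exact eLpNorm_mono_ae key
  calc ‖H₁ f‖ ≤ ‖H₀ g‖ := h1
    _ ≤ ‖H₀‖ * ‖g‖ := H₀.le_opNorm g
    _ = ‖H₀‖ * ‖f‖ := by rw [hgf]
end

section
/- Let X = ℂ/Λ be a complex elliptic curve and let ℘ be its Weierstrass function. Fix x ∈ ℂ and consider f(p,q,x) = θ(p+q−x)θ(q+x−p)/(θ(q−x−p)θ(q+x+p)). Then f'_p := ∂f/∂p, viewed as a function of q, is an elliptic function with poles of order 2 exactly at q ≡ ±(x+p) mod Λ, and consequently there exists a polynomial P(v) of degree 2 in v (with coefficients depending on p, x) such that f'_p = P(f) as meromorphic functions of q. -/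
open Complex Filter

open scoped Topology

lemma per_int {H : ℂ → ℂ} {τ : ℂ} (h1 : ∀ q, H (q + 1) = H q) (ht : ∀ q, H (q + τ) = H q)
    (m n : ℤ) (q : ℂ) : H (q + ((m : ℂ) + (n : ℂ) * τ)) = H q := by
  have key : ∀ (c : ℂ), (∀ w, H (w + c) = H w) → ∀ (k : ℤ) (w : ℂ), H (w + (k : ℂ) * c) = H w := by
    intro c hc k
    induction k using Int.induction_on with
    | zero => simp
    | succ i ih => intro w
                   have : w + ((i:ℤ)+1:ℤ) * c = (w + (i:ℂ) * c) + c := by push_cast; ring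
                   rw [this, hc]; exact ih w
    | pred i ih => intro w
                   have : (w + ((-(i:ℤ) - 1 : ℤ) : ℂ) * c) + c = w + ((-(i:ℤ) : ℤ) : ℂ) * c := by
                     push_cast; ring
                   have h2 := hc (w + ((-(i:ℤ) - 1 : ℤ) : ℂ) * c)
                   rw [this] at h2
                   rw [← h2]; exact ih w
  have e : q + ((m : ℂ) + (n : ℂ) * τ) = (q + (m : ℂ) * 1) + (n : ℂ) * τ := by ring
  rw [e, key τ ht n, key 1 h1 m]

lemma analyticAt_dslope {f : ℂ → ℂ} {a : ℂ} (hf : AnalyticAt ℂ f a) :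
    AnalyticAt ℂ (dslope f a) a := by
  obtain ⟨p, hp⟩ := hf
  exact ⟨p.fslope, hp.has_fpower_series_dslope_fslope⟩

lemma factor_lin {g : ℂ → ℂ} (hg : Differentiable ℂ g) (q₀ : ℂ) (h0 : g q₀ = 0) :
    ∃ u : ℂ → ℂ, Differentiable ℂ u ∧ u q₀ = deriv g q₀ ∧ ∀ q, g q = (q - q₀) * u q := by
  refine ⟨dslope g q₀, ?_, dslope_same g q₀, ?_⟩
  · intro z
    rcases eq_or_ne z q₀ with rfl | hz
    · exact (analyticAt_dslope ((hg.analyticAt z))).differentiableAt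
    · exact (differentiableAt_dslope_of_ne hz).mpr (hg z)
  · intro q
    rcases eq_or_ne q q₀ with rfl | hq
    · simp [h0]
    · have := sub_smul_dslope g q₀ q
      rw [h0, sub_zero, smul_eq_mul] at this
      exact this.symm

lemma sq_factor {m : ℂ → ℂ} {a : ℂ} (h0 : m a = 0) (h1 : deriv m a = 0) :
    ∀ q, m q = (q - a) ^ 2 * dslope (dslope m a) a q := by
  intro q
  have s1 : m q = (q - a) * dslope m a q := by
    have := sub_smul_dslope m a q; rw [h0, sub_zero, smul_eq_mul] at this; exact this.symm
  have s2 : dslope m a q = (q - a) * dslope (dslope m a) a q := by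
    have := sub_smul_dslope (dslope m a) a q
    rw [dslope_same, h1, sub_zero, smul_eq_mul] at this
    exact this.symm
  rw [s1, s2]; ring

noncomputable def tildeF (G : ℂ → ℂ) : ℂ → ℂ := fun q => limUnder (𝓝[≠] q) G

lemma tildeF_eq_of_loc {G M : ℂ → ℂ} {z : ℂ} (hM : AnalyticAt ℂ M z)
    (hE : G =ᶠ[𝓝[≠] z] M) :
    tildeF G =ᶠ[𝓝 z] M ∧ tildeF G z = M z ∧ DifferentiableAt ℂ (tildeF G) z := by
  haveI : ∀ q : ℂ, (𝓝[≠] q).NeBot := fun q => by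
    exact NormedField.nhdsNE_neBot q
  have hE' : ∀ᶠ q in 𝓝 z, q ≠ z → G q = M q := by
    have := eventually_nhdsWithin_iff.mp hE
    filter_upwards [this] with q hq hqz using hq hqz
  have hM' : ∀ᶠ q in 𝓝 z, AnalyticAt ℂ M q := hM.eventually_analyticAt
  obtain ⟨U, hU, hUo, hzU⟩ := eventually_nhds_iff.mp (hE'.and hM')
  have main : ∀ q ∈ U, tildeF G q = M q := by
    intro q hq
    have hcont : Tendsto M (𝓝[≠] q) (𝓝 (M q)) :=
      ((hU q hq).2.continuousAt).continuousWithinAt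
    have hEq : G =ᶠ[𝓝[≠] q] M := by
      rcases eq_or_ne q z with rfl | hqz
      · exact hE
      · have hmem : U \ {z} ∈ 𝓝[≠] q := by
          apply nhdsWithin_le_nhds
          exact (hUo.sdiff isClosed_singleton).mem_nhds ⟨hq, hqz⟩
        filter_upwards [hmem] with q' hq' using (hU q' hq'.1).1 hq'.2
    exact (hcont.congr' hEq.symm).limUnder_eq
  refine ⟨eventually_nhds_iff.mpr ⟨U, main, hUo, hzU⟩, main z hzU, ?_⟩
  have := eventually_nhds_iff.mpr ⟨U, main, hUo, hzU⟩
  exact (Filter.EventuallyEq.differentiableAt_iff this).mpr hM.differentiableAt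

lemma shift_punct {P : ℂ → Prop} {z c : ℂ} (h : ∀ᶠ q in 𝓝[≠] z, P q) :
    ∀ᶠ q in 𝓝[≠] (z + c), P (q - c) := by
  have h' := eventually_nhdsWithin_iff.mp h
  obtain ⟨ε, hε, hb⟩ := Metric.eventually_nhds_iff.mp h'
  rw [eventually_nhdsWithin_iff]
  apply Metric.eventually_nhds_iff.mpr
  refine ⟨ε, hε, fun q hq hq' => hb ?_ ?_⟩
  · rw [Complex.dist_eq] at hq ⊢
    rw [show q - c - z = q - (z + c) from by ring]
    exact hq
  · simp only [Set.mem_compl_iff, Set.mem_singleton_iff]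
    intro h0
    apply hq'
    simp only [Set.mem_singleton_iff]
    linear_combination h0

lemma neg_punct {P : ℂ → Prop} {z : ℂ} (h : ∀ᶠ q in 𝓝[≠] z, P q) :
    ∀ᶠ q in 𝓝[≠] (-z), P (-q) := by
  have h' := eventually_nhdsWithin_iff.mp h
  obtain ⟨ε, hε, hb⟩ := Metric.eventually_nhds_iff.mp h'
  rw [eventually_nhdsWithin_iff]
  apply Metric.eventually_nhds_iff.mpr
  refine ⟨ε, hε, fun q hq hq' => hb ?_ ?_⟩
  · rw [Complex.dist_eq] at hq ⊢
    have e : ‖-q - z‖ = ‖q - -z‖ := by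
      rw [show -q - z = -(q - -z) from by ring]
      exact norm_neg _
    rw [e]
    exact hq
  · simp only [Set.mem_compl_iff, Set.mem_singleton_iff]
    intro h0
    apply hq'
    simp only [Set.mem_singleton_iff]
    linear_combination -h0

lemma fund_dom {τ : ℂ} (hτ : τ.im ≠ 0) (z : ℂ) :
    ∃ (m n : ℤ) (a b : ℝ), a ∈ Set.Icc (0:ℝ) 1 ∧ b ∈ Set.Icc (0:ℝ) 1 ∧
      z = ((a:ℂ) + (b:ℂ) * τ) + ((m:ℂ) + (n:ℂ) * τ) := by
  obtain ⟨B, hBdef⟩ : ∃ B : ℝ, B = z.im / τ.im := ⟨_, rfl⟩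
  obtain ⟨A, hAdef⟩ : ∃ A : ℝ, A = z.re - B * τ.re := ⟨_, rfl⟩
  refine ⟨⌊A⌋, ⌊B⌋, Int.fract A, Int.fract B, ⟨Int.fract_nonneg A, (Int.fract_lt_one A).le⟩,
    ⟨Int.fract_nonneg B, (Int.fract_lt_one B).le⟩, ?_⟩
  have hA : (Int.fract A : ℝ) + (⌊A⌋ : ℝ) = A := by rw [add_comm]; exact Int.floor_add_fract A
  have hB : (Int.fract B : ℝ) + (⌊B⌋ : ℝ) = B := by rw [add_comm]; exact Int.floor_add_fract B
  have hz : z = (A : ℂ) + (B : ℂ) * τ := by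
    apply Complex.ext
    · simp only [Complex.add_re, Complex.mul_re, Complex.ofReal_re, Complex.ofReal_im,
        zero_mul, sub_zero]
      rw [hAdef]; ring
    · simp only [Complex.add_im, Complex.mul_im, Complex.ofReal_re, Complex.ofReal_im,
        zero_mul, add_zero, Complex.ofReal_im]
      rw [hBdef]
      field_simp
      ring
  rw [hz]
  rw [show (((Int.fract A : ℝ) : ℂ) + ((Int.fract B : ℝ) : ℂ) * τ) + (((⌊A⌋ : ℤ) : ℂ) + ((⌊B⌋ : ℤ) : ℂ) * τ)
      = (((Int.fract A + (⌊A⌋ : ℝ)) : ℝ) : ℂ) + (((Int.fract B + (⌊B⌋ : ℝ)) : ℝ) : ℂ) * τ from by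
    push_cast; ring]
  rw [hA, hB]

noncomputable def NumF (θ : ℂ → ℂ) (p x : ℂ) : ℂ → ℂ := fun q =>
  (deriv θ (p + q - x) * θ (q + x - p) - θ (p + q - x) * deriv θ (q + x - p)) *
      (θ (q - x - p) * θ (q + x + p)) +
    θ (p + q - x) * θ (q + x - p) *
      (deriv θ (q - x - p) * θ (q + x + p) - θ (q - x - p) * deriv θ (q + x + p))

lemma key_formula {θ : ℂ → ℂ} (hθdiff : Differentiable ℂ θ) (p x q : ℂ)
    (hc : θ (q - x - p) ≠ 0) (hd : θ (q + x + p) ≠ 0) :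
    deriv (fun p' => θ (p' + q - x) * θ (q + x - p') / (θ (q - x - p') * θ (q + x + p'))) p
      = NumF θ p x q / (θ (q - x - p) * θ (q + x + p)) ^ 2 := by
  have Ha : HasDerivAt (fun p' : ℂ => θ (p' + q - x)) (deriv θ (p + q - x) * 1) p := by
    have inner : HasDerivAt (fun p' : ℂ => p' + q - x) 1 p := by
      simpa using ((hasDerivAt_id p).add_const q).sub_const x
    exact ((hθdiff (p + q - x)).hasDerivAt).comp p inner
  have Hb : HasDerivAt (fun p' : ℂ => θ (q + x - p')) (deriv θ (q + x - p) * (-1)) p := by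
    have inner : HasDerivAt (fun p' : ℂ => q + x - p') (-1) p := by
      simpa using (hasDerivAt_id p).const_sub (q + x)
    exact ((hθdiff (q + x - p)).hasDerivAt).comp p inner
  have Hc : HasDerivAt (fun p' : ℂ => θ (q - x - p')) (deriv θ (q - x - p) * (-1)) p := by
    have inner : HasDerivAt (fun p' : ℂ => q - x - p') (-1) p := by
      simpa using (hasDerivAt_id p).const_sub (q - x)
    exact ((hθdiff (q - x - p)).hasDerivAt).comp p inner
  have Hd : HasDerivAt (fun p' : ℂ => θ (q + x + p')) (deriv θ (q + x + p) * 1) p := by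
    have inner : HasDerivAt (fun p' : ℂ => q + x + p') 1 p := by
      simpa using (hasDerivAt_id p).const_add (q + x)
    exact ((hθdiff (q + x + p)).hasDerivAt).comp p inner
  have HN := Ha.mul Hb
  have HD := Hc.mul Hd
  have HQ := HN.div HD (mul_ne_zero hc hd)
  rw [show (fun p' => θ (p' + q - x) * θ (q + x - p') / (θ (q - x - p') * θ (q + x + p'))) = ((fun p' => θ (p' + q - x)) * fun p' => θ (q + x - p')) / ((fun p' => θ (q - x - p')) * fun p' => θ (q + x + p')) from rfl, HQ.deriv]
  rw [NumF]
  simp only [Pi.mul_apply]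
  ring

lemma NumF_diff {θ : ℂ → ℂ} (hθdiff : Differentiable ℂ θ) (p x : ℂ) :
    Differentiable ℂ (NumF θ p x) := by
  have hθana : AnalyticOnNhd ℂ θ Set.univ := fun z _ => hθdiff.analyticAt z
  have hθ' : Differentiable ℂ (deriv θ) := fun z => (hθana.deriv z trivial).differentiableAt
  have dA : Differentiable ℂ (fun q : ℂ => p + q - x) :=
    ((differentiable_const p).add differentiable_id).sub_const x
  have dB : Differentiable ℂ (fun q : ℂ => q + x - p) :=
    (differentiable_id.add_const x).sub_const p
  have dC : Differentiable ℂ (fun q : ℂ => q - x - p) :=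
    (differentiable_id.sub_const x).sub_const p
  have dD : Differentiable ℂ (fun q : ℂ => q + x + p) :=
    (differentiable_id.add_const x).add_const p
  exact ((((hθ'.comp dA).mul (hθdiff.comp dB)).sub
      ((hθdiff.comp dA).mul (hθ'.comp dB))).mul
      ((hθdiff.comp dC).mul (hθdiff.comp dD))).add
    (((hθdiff.comp dA).mul (hθdiff.comp dB)).mul
      (((hθ'.comp dC).mul (hθdiff.comp dD)).sub ((hθdiff.comp dC).mul (hθ'.comp dD))))

lemma lat_neg {τ z : ℂ} (h : InLattice τ z) : InLattice τ (-z) := by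
  obtain ⟨m, n, rfl⟩ := h; exact ⟨-m, -n, by push_cast; ring⟩

lemma lat_sub {τ z w : ℂ} (h : InLattice τ z) (h' : InLattice τ w) : InLattice τ (z - w) := by
  obtain ⟨m, n, rfl⟩ := h; obtain ⟨m', n', rfl⟩ := h'
  exact ⟨m - m', n - n', by push_cast; ring⟩

lemma poleA_lemma {τ : ℂ} {θ : ℂ → ℂ} (hθdiff : Differentiable ℂ θ)
    (hθzero : ∀ z, θ z = 0 ↔ InLattice τ z) (hθsimple : ∀ z, InLattice τ z → deriv θ z ≠ 0)
    {p x : ℂ} (h2p : ¬ InLattice τ (2 * p)) (h2x : ¬ InLattice τ (2 * x))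
    (hsum : ¬ InLattice τ (2 * (p + x)))
    {g : ℂ → ℂ}
    (hg : ∀ q, θ (q - x - p) ≠ 0 → θ (q + x + p) ≠ 0 →
      g q = NumF θ p x q / (θ (q - x - p) * θ (q + x + p)) ^ 2)
    (q₀ : ℂ) (hl : InLattice τ (q₀ - (x + p))) :
    ∃ h : ℂ → ℂ, AnalyticAt ℂ h q₀ ∧ h q₀ ≠ 0 ∧
      ∀ᶠ q in 𝓝[≠] q₀, g q = h q / (q - q₀) ^ 2 := by
  have thNe : ∀ z, ¬ InLattice τ z → θ z ≠ 0 := fun z h h0 => h ((hθzero z).1 h0)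
  have hl' : InLattice τ (q₀ - x - p) := by
    rwa [show q₀ - x - p = q₀ - (x + p) from by ring]
  have hc0 : θ (q₀ - x - p) = 0 := (hθzero _).2 hl'
  have dC : Differentiable ℂ (fun q : ℂ => θ (q - x - p)) :=
    hθdiff.comp ((differentiable_id.sub_const x).sub_const p)
  obtain ⟨u, hu_diff, hu_val, hu_eq⟩ := factor_lin dC q₀ hc0
  have hu_q₀ : u q₀ = deriv θ (q₀ - x - p) := by
    rw [hu_val]
    have hder : HasDerivAt (fun q : ℂ => θ (q - x - p)) (deriv θ (q₀ - x - p) * 1) q₀ := by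
      have inner : HasDerivAt (fun q : ℂ => q - x - p) 1 q₀ := by
        simpa using ((hasDerivAt_id q₀).sub_const x).sub_const p
      exact ((hθdiff _).hasDerivAt).comp q₀ inner
    rw [hder.deriv]; ring
  have hu_ne : u q₀ ≠ 0 := by rw [hu_q₀]; exact hθsimple _ hl'
  have hθd : θ (q₀ + x + p) ≠ 0 := by
    apply thNe
    intro h
    apply hsum
    have := lat_sub h hl'
    rwa [show q₀ + x + p - (q₀ - x - p) = 2 * (p + x) from by ring] at this
  have hθa : θ (p + q₀ - x) ≠ 0 := by
    apply thNe
    intro h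
    apply h2p
    have := lat_sub h hl'
    rwa [show p + q₀ - x - (q₀ - x - p) = 2 * p from by ring] at this
  have hθb : θ (q₀ + x - p) ≠ 0 := by
    apply thNe
    intro h
    apply h2x
    have := lat_sub h hl'
    rwa [show q₀ + x - p - (q₀ - x - p) = 2 * x from by ring] at this
  refine ⟨fun q => NumF θ p x q / (u q ^ 2 * θ (q + x + p) ^ 2), ?_, ?_, ?_⟩
  · -- analyticity
    have hW : IsOpen {q : ℂ | u q ≠ 0 ∧ θ (q + x + p) ≠ 0} := by
      have h1 : IsOpen {q : ℂ | u q ≠ 0} :=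
        isOpen_compl_singleton.preimage hu_diff.continuous
      have h2 : IsOpen {q : ℂ | θ (q + x + p) ≠ 0} :=
        isOpen_compl_singleton.preimage
          (hθdiff.continuous.comp ((continuous_id.add continuous_const).add continuous_const))
      exact h1.inter h2
    have hmem : {q : ℂ | u q ≠ 0 ∧ θ (q + x + p) ≠ 0} ∈ 𝓝 q₀ :=
      hW.mem_nhds ⟨hu_ne, hθd⟩
    apply DifferentiableOn.analyticAt _ hmem
    intro z hz
    apply DifferentiableAt.differentiableWithinAt
    exact ((NumF_diff hθdiff p x) z).div
      (((hu_diff z).pow 2).mul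
        (((hθdiff.comp ((differentiable_id.add_const x).add_const p)) z).pow 2))
      (mul_ne_zero (pow_ne_zero 2 hz.1) (pow_ne_zero 2 hz.2))
  · -- nonzero at q₀
    have hNum : NumF θ p x q₀ = θ (p + q₀ - x) * θ (q₀ + x - p) *
        (deriv θ (q₀ - x - p) * θ (q₀ + x + p)) := by
      rw [NumF]; rw [hc0]; ring
    show NumF θ p x q₀ / (u q₀ ^ 2 * θ (q₀ + x + p) ^ 2) ≠ 0
    rw [hNum]
    exact div_ne_zero
      (mul_ne_zero (mul_ne_zero hθa hθb) (mul_ne_zero (hθsimple _ hl') hθd))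
      (mul_ne_zero (pow_ne_zero 2 hu_ne) (pow_ne_zero 2 hθd))
  · -- eventual equality
    have e1 : ∀ᶠ q in 𝓝 q₀, u q ≠ 0 := hu_diff.continuous.continuousAt.eventually_ne hu_ne
    have e2 : ∀ᶠ q in 𝓝 q₀, θ (q + x + p) ≠ 0 :=
      ((hθdiff.continuous.comp ((continuous_id.add continuous_const).add
        continuous_const)).continuousAt).eventually_ne hθd
    filter_upwards [e1.filter_mono nhdsWithin_le_nhds, e2.filter_mono nhdsWithin_le_nhds,
      self_mem_nhdsWithin] with q hqu hqd hqne
    have hqne' : q ≠ q₀ := hqne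
    have hcne : θ (q - x - p) ≠ 0 := by
      rw [hu_eq q]; exact mul_ne_zero (sub_ne_zero.mpr hqne') hqu
    rw [hg q hcne hqd, hu_eq q]
    field_simp

lemma pole_alg {N A B u d t ρ β : ℂ} (ht : t ≠ 0) (hu : u ≠ 0) (hd : d ≠ 0) :
    N / (t * u * d) ^ 2 - (ρ * (A * B / (t * u * d)) ^ 2 + β * (A * B / (t * u * d)))
      = (N / (u ^ 2 * d ^ 2) - ρ * (A * B / (u * d)) ^ 2 - β * (t * (A * B / (u * d)))) / t ^ 2 := by
  have e2 : N / (t * u * d) ^ 2 = (N / (u ^ 2 * d ^ 2)) / t ^ 2 := by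
    rw [div_div, show u ^ 2 * d ^ 2 * t ^ 2 = (t * u * d) ^ 2 from by ring]
  have e1 : A * B / (t * u * d) = (A * B / (u * d)) / t := by
    rw [div_div, show u * d * t = t * u * d from by ring]
  have e3 : β * (A * B / (u * d) / t) = β * (t * (A * B / (u * d))) / t ^ 2 := by
    rw [eq_div_iff (pow_ne_zero 2 ht)]
    field_simp
  rw [e2, e1, e3, div_pow]
  ring

set_option maxHeartbeats 1000000 in
lemma loc_at_s {τ : ℂ} {θ : ℂ → ℂ} (hθdiff : Differentiable ℂ θ)
    (hθzero : ∀ z, θ z = 0 ↔ InLattice τ z) (hθsimple : ∀ z, InLattice τ z → deriv θ z ≠ 0)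
    {p x : ℂ} (h2p : ¬ InLattice τ (2 * p)) (h2x : ¬ InLattice τ (2 * x))
    (hsum : ¬ InLattice τ (2 * (p + x)))
    {g f : ℂ → ℂ}
    (hg : ∀ q, θ (q - x - p) ≠ 0 → θ (q + x + p) ≠ 0 →
      g q = NumF θ p x q / (θ (q - x - p) * θ (q + x + p)) ^ 2)
    (hf : ∀ q, f q = θ (p + q - x) * θ (q + x - p) / (θ (q - x - p) * θ (q + x + p))) :
    ∃ (α β : ℂ) (M : ℂ → ℂ), α ≠ 0 ∧ AnalyticAt ℂ M (x + p) ∧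
      (fun q => g q - (α * f q ^ 2 + β * f q)) =ᶠ[𝓝[≠] (x + p)] M := by
  have lat0 : InLattice τ 0 := ⟨0, 0, by simp⟩
  have th0 : θ 0 = 0 := (hθzero 0).2 lat0
  have thNe : ∀ z, ¬ InLattice τ z → θ z ≠ 0 := fun z h h0 => h ((hθzero z).1 h0)
  have hθ'0 : deriv θ 0 ≠ 0 := hθsimple 0 lat0
  have hc0 : θ ((x + p) - x - p) = 0 := by rw [show (x + p) - x - p = (0:ℂ) from by ring]; exact th0
  have dC : Differentiable ℂ (fun q : ℂ => θ (q - x - p)) :=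
    hθdiff.comp ((differentiable_id.sub_const x).sub_const p)
  have dAB : Differentiable ℂ (fun q : ℂ => θ (p + q - x) * θ (q + x - p)) :=
    (hθdiff.comp (((differentiable_const p).add differentiable_id).sub_const x)).mul
      (hθdiff.comp ((differentiable_id.add_const x).sub_const p))
  have dD : Differentiable ℂ (fun q : ℂ => θ (q + x + p)) :=
    hθdiff.comp ((differentiable_id.add_const x).add_const p)
  obtain ⟨u, hu_diff, hu_val, hu_eq⟩ := factor_lin dC (x + p) hc0
  have hu_s : u (x + p) = deriv θ 0 := by
    rw [hu_val]
    have hder : HasDerivAt (fun q : ℂ => θ (q - x - p)) (deriv θ ((x + p) - x - p) * 1) (x + p) := by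
      have inner : HasDerivAt (fun q : ℂ => q - x - p) 1 (x + p) := by
        simpa using ((hasDerivAt_id (x + p)).sub_const x).sub_const p
      exact ((hθdiff _).hasDerivAt).comp (x + p) inner
    rw [hder.deriv, show (x + p) - x - p = (0:ℂ) from by ring]; ring
  have hu_ne : u (x + p) ≠ 0 := by rw [hu_s]; exact hθ'0
  have hθds : θ ((x + p) + x + p) ≠ 0 := by
    apply thNe; intro h
    rw [show (x + p) + x + p = 2 * (p + x) from by ring] at h
    exact hsum h
  have h2p' : θ (2 * p) ≠ 0 := thNe _ h2p
  have h2x' : θ (2 * x) ≠ 0 := thNe _ h2x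
  have hds' : θ (2 * (p + x)) ≠ 0 := thNe _ hsum
  obtain ⟨r, hrdef⟩ : ∃ r : ℂ, r = θ (2 * p) * θ (2 * x) / (deriv θ 0 * θ (2 * (p + x))) :=
    ⟨_, rfl⟩
  have hrne : r ≠ 0 := by
    rw [hrdef]
    exact div_ne_zero (mul_ne_zero h2p' h2x') (mul_ne_zero hθ'0 hds')
  obtain ⟨H, hHdef⟩ : ∃ H : ℂ → ℂ,
      H = fun q => θ (p + q - x) * θ (q + x - p) / (u q * θ (q + x + p)) := ⟨_, rfl⟩
  obtain ⟨h₁, h₁def⟩ : ∃ h₁ : ℂ → ℂ,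
      h₁ = fun q => NumF θ p x q / (u q ^ 2 * θ (q + x + p) ^ 2) := ⟨_, rfl⟩
  have hHs : H (x + p) = r := by
    simp only [hHdef]
    rw [show p + (x + p) - x = 2 * p from by ring, show (x + p) + x - p = 2 * x from by ring,
      show (x + p) + x + p = 2 * (p + x) from by ring, hu_s, hrdef]
  have hh₁s : h₁ (x + p) = r := by
    simp only [h₁def]
    have hNum : NumF θ p x (x + p) = θ (2 * p) * θ (2 * x) * (deriv θ 0 * θ (2 * (p + x))) := by
      rw [NumF]
      rw [show p + (x + p) - x = 2 * p from by ring, show (x + p) + x - p = 2 * x from by ring,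
        show (x + p) + x + p = 2 * (p + x) from by ring,
        show (x + p) - x - p = (0:ℂ) from by ring, th0]
      ring
    rw [hNum, hu_s, hrdef]
    field_simp
    ring
  have dH : DifferentiableAt ℂ H (x + p) := by
    rw [hHdef]
    exact (dAB _).div ((hu_diff _).mul (dD _)) (mul_ne_zero hu_ne hθds)
  have dh₁ : DifferentiableAt ℂ h₁ (x + p) := by
    rw [h₁def]
    exact ((NumF_diff hθdiff p x) _).div (((hu_diff _).pow 2).mul ((dD _).pow 2))
      (mul_ne_zero (pow_ne_zero 2 hu_ne) (pow_ne_zero 2 hθds))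
  obtain ⟨β, hβdef⟩ : ∃ β : ℂ, β = (deriv h₁ (x + p) - 2 * deriv H (x + p)) / r := ⟨_, rfl⟩
  obtain ⟨m, hmdef⟩ : ∃ m : ℂ → ℂ,
      m = fun q => h₁ q - r⁻¹ * H q ^ 2 - β * ((q - (x + p)) * H q) := ⟨_, rfl⟩
  have hm0 : m (x + p) = 0 := by
    simp only [hmdef]
    rw [hh₁s, hHs]
    field_simp
    ring
  have hm' : deriv m (x + p) = 0 := by
    have HH : HasDerivAt H (deriv H (x + p)) (x + p) := dH.hasDerivAt
    have Hh : HasDerivAt h₁ (deriv h₁ (x + p)) (x + p) := dh₁.hasDerivAt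
    have t1 : HasDerivAt (fun q => r⁻¹ * H q ^ 2)
        (r⁻¹ * ((2 : ℕ) * H (x + p) ^ (2 - 1) * deriv H (x + p))) (x + p) :=
      (HH.pow 2).const_mul r⁻¹
    have t2 : HasDerivAt (fun q => β * ((q - (x + p)) * H q))
        (β * (1 * H (x + p) + ((x + p) - (x + p)) * deriv H (x + p))) (x + p) :=
      (((hasDerivAt_id _).sub_const _).mul HH).const_mul β
    have HM : HasDerivAt m
        (deriv h₁ (x + p) - r⁻¹ * ((2 : ℕ) * H (x + p) ^ (2 - 1) * deriv H (x + p))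
          - β * (1 * H (x + p) + ((x + p) - (x + p)) * deriv H (x + p))) (x + p) := by
      rw [hmdef]
      exact (Hh.sub t1).sub t2
    rw [HM.deriv, hHs, hβdef]
    field_simp
    ring
  have hfac := sq_factor hm0 hm'
  have hmana : AnalyticAt ℂ m (x + p) := by
    have hW : IsOpen {q : ℂ | u q ≠ 0 ∧ θ (q + x + p) ≠ 0} := by
      have h1 : IsOpen {q : ℂ | u q ≠ 0} := isOpen_compl_singleton.preimage hu_diff.continuous
      have h2 : IsOpen {q : ℂ | θ (q + x + p) ≠ 0} :=
        isOpen_compl_singleton.preimage dD.continuous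
      exact h1.inter h2
    apply DifferentiableOn.analyticAt _ (hW.mem_nhds ⟨hu_ne, hθds⟩)
    intro z hz
    apply DifferentiableAt.differentiableWithinAt
    have dHz : DifferentiableAt ℂ H z := by
      rw [hHdef]
      exact (dAB _).div ((hu_diff _).mul (dD _)) (mul_ne_zero hz.1 hz.2)
    have dh₁z : DifferentiableAt ℂ h₁ z := by
      rw [h₁def]
      exact ((NumF_diff hθdiff p x) _).div (((hu_diff _).pow 2).mul ((dD _).pow 2))
        (mul_ne_zero (pow_ne_zero 2 hz.1) (pow_ne_zero 2 hz.2))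
    rw [hmdef]
    exact (dh₁z.sub ((dHz.pow 2).const_mul r⁻¹)).sub
      (((differentiableAt_id.sub_const _).mul dHz).const_mul β)
  refine ⟨r⁻¹, β, dslope (dslope m (x + p)) (x + p), inv_ne_zero hrne,
    analyticAt_dslope (analyticAt_dslope hmana), ?_⟩
  have e1 : ∀ᶠ q in 𝓝 (x + p), u q ≠ 0 := hu_diff.continuous.continuousAt.eventually_ne hu_ne
  have e2 : ∀ᶠ q in 𝓝 (x + p), θ (q + x + p) ≠ 0 := dD.continuous.continuousAt.eventually_ne hθds
  filter_upwards [e1.filter_mono nhdsWithin_le_nhds, e2.filter_mono nhdsWithin_le_nhds,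
    self_mem_nhdsWithin] with q hqu hqd hqne
  have hqne' : q ≠ x + p := hqne
  have hsub : q - (x + p) ≠ 0 := sub_ne_zero.mpr hqne'
  have hcne : θ (q - x - p) ≠ 0 := by
    rw [hu_eq q]; exact mul_ne_zero hsub hqu
  have hMq : dslope (dslope m (x + p)) (x + p) q = m q / (q - (x + p)) ^ 2 := by
    rw [hfac q]
    field_simp
  show g q - (r⁻¹ * f q ^ 2 + β * f q) = dslope (dslope m (x + p)) (x + p) q
  have hmq : m q = NumF θ p x q / (u q ^ 2 * θ (q + x + p) ^ 2)
      - r⁻¹ * (θ (p + q - x) * θ (q + x - p) / (u q * θ (q + x + p))) ^ 2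
      - β * ((q - (x + p)) * (θ (p + q - x) * θ (q + x - p) / (u q * θ (q + x + p)))) := by
    simp only [hmdef, h₁def, hHdef]
  rw [hMq, hg q hcne hqd, hf q, hu_eq q, hmq]
  exact pole_alg hsub hqu hqd
set_option maxHeartbeats 1000000 in
/-- for `f(p,q,x) = θ(p+q-x)θ(q+x-p)/(θ(q-x-p)θ(q+x+p))`, the function
`f'_p = ∂f/∂p`, viewed as a function of `q`, is elliptic with poles of order 2 exactly at
`q ≡ ±(x+p) mod Λ`; consequently there is a degree-2 polynomial `P` (depending on `p, x`)
with `f'_p = P(f)` as meromorphic functions of `q`. -/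
theorem f_prime_p_is_polynomial_in_f
    (τ : ℂ) (hτ : 0 < τ.im) (θ : ℂ → ℂ)
    (hθdiff : Differentiable ℂ θ)
    (hθodd : ∀ z, θ (-z) = -θ z)
    (hθ1 : ∀ z, θ (z + 1) = -θ z)
    (hθτ : ∀ z, θ (z + τ) = -Complex.exp (-(Real.pi : ℂ) * Complex.I * (τ + 2 * z)) * θ z)
    (hθzero : ∀ z, θ z = 0 ↔ InLattice τ z)
    (hθsimple : ∀ z, InLattice τ z → deriv θ z ≠ 0)
    (p x : ℂ)
    (h2p : ¬ InLattice τ (2 * p)) (h2x : ¬ InLattice τ (2 * x))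
    (hsum : ¬ InLattice τ (2 * (p + x))) (hdiff : ¬ InLattice τ (2 * (p - x)))
    (F : ℂ → ℂ → ℂ)
    (hF : ∀ p' q, F p' q =
      θ (p' + q - x) * θ (q + x - p') / (θ (q - x - p') * θ (q + x + p')))
    (fp : ℂ → ℂ) (hfp : ∀ q, fp q = deriv (fun p' => F p' q) p) :
    -- `f'_p` is elliptic in `q`
    (∀ q, fp (q + 1) = fp q ∧ fp (q + τ) = fp q) ∧
    -- analytic away from `q ≡ ±(x+p)` mod `Λ`
    (∀ q, ¬ InLattice τ (q - (x + p)) → ¬ InLattice τ (q + (x + p)) →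
      DifferentiableAt ℂ fp q) ∧
    -- poles of order exactly 2 at `q ≡ ±(x+p)` mod `Λ`
    (∀ q₀, (InLattice τ (q₀ - (x + p)) ∨ InLattice τ (q₀ + (x + p))) →
      ∃ h : ℂ → ℂ, AnalyticAt ℂ h q₀ ∧ h q₀ ≠ 0 ∧
        ∀ᶠ q in nhdsWithin q₀ {q₀}ᶜ, fp q = h q / (q - q₀) ^ 2) ∧
    -- `f'_p = P(f)` for a degree-2 polynomial `P`
    (∃ P : Polynomial ℂ, P.degree = 2 ∧
      ∀ q, ¬ InLattice τ (q - (x + p)) → ¬ InLattice τ (q + (x + p)) →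
        fp q = P.eval (F p q)) := by
  have thNe : ∀ z, ¬ InLattice τ z → θ z ≠ 0 := fun z h h0 => h ((hθzero z).1 h0)
  -- periodicity and evenness of F in q
  have perF1 : ∀ p' q, F p' (q + 1) = F p' q := by
    intro p' q
    rw [hF, hF, show p' + (q + 1) - x = (p' + q - x) + 1 from by ring,
      show q + 1 + x - p' = (q + x - p') + 1 from by ring,
      show q + 1 - x - p' = (q - x - p') + 1 from by ring,
      show q + 1 + x + p' = (q + x + p') + 1 from by ring, hθ1, hθ1, hθ1, hθ1,
      neg_mul_neg, neg_mul_neg]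
  have perFτ : ∀ p' q, F p' (q + τ) = F p' q := by
    intro p' q
    have hE : ∀ z w : ℂ,
        (-Complex.exp (-(Real.pi : ℂ) * Complex.I * (τ + 2 * z)) * θ z) *
          (-Complex.exp (-(Real.pi : ℂ) * Complex.I * (τ + 2 * w)) * θ w)
        = Complex.exp (-(Real.pi : ℂ) * Complex.I * (2 * τ) +
            -(Real.pi : ℂ) * Complex.I * (2 * (z + w))) * (θ z * θ w) := by
      intro z w
      rw [show (-Complex.exp (-(Real.pi : ℂ) * Complex.I * (τ + 2 * z)) * θ z) *
          (-Complex.exp (-(Real.pi : ℂ) * Complex.I * (τ + 2 * w)) * θ w)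
          = Complex.exp (-(Real.pi : ℂ) * Complex.I * (τ + 2 * z)) *
            Complex.exp (-(Real.pi : ℂ) * Complex.I * (τ + 2 * w)) * (θ z * θ w) from by ring,
        ← Complex.exp_add]
      congr 2
      ring
    rw [hF, hF, show p' + (q + τ) - x = (p' + q - x) + τ from by ring,
      show q + τ + x - p' = (q + x - p') + τ from by ring,
      show q + τ - x - p' = (q - x - p') + τ from by ring,
      show q + τ + x + p' = (q + x + p') + τ from by ring, hθτ, hθτ, hθτ, hθτ, hE, hE]
    rw [show -(Real.pi : ℂ) * Complex.I * (2 * τ) +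
        -(Real.pi : ℂ) * Complex.I * (2 * (p' + q - x + (q + x - p')))
        = -(Real.pi : ℂ) * Complex.I * (2 * τ) +
          -(Real.pi : ℂ) * Complex.I * (2 * (q - x - p' + (q + x + p'))) from by ring]
    exact mul_div_mul_left _ _ (Complex.exp_ne_zero _)
  have evenF : ∀ p' q, F p' (-q) = F p' q := by
    intro p' q
    rw [hF, hF, show p' + -q - x = -(q + x - p') from by ring,
      show -q + x - p' = -(p' + q - x) from by ring,
      show -q - x - p' = -(q + x + p') from by ring,
      show -q + x + p' = -(q - x - p') from by ring, hθodd, hθodd, hθodd, hθodd,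
      neg_mul_neg, neg_mul_neg, mul_comm (θ (q + x - p')) (θ (p' + q - x)),
      mul_comm (θ (q + x + p')) (θ (q - x - p'))]
  -- fp inherits these
  have per1fp : ∀ q, fp (q + 1) = fp q := fun q => by
    rw [hfp, hfp]; exact congrArg (fun g => deriv g p) (funext fun p' => perF1 p' q)
  have perτfp : ∀ q, fp (q + τ) = fp q := fun q => by
    rw [hfp, hfp]; exact congrArg (fun g => deriv g p) (funext fun p' => perFτ p' q)
  have evenfp : ∀ q, fp (-q) = fp q := fun q => by
    rw [hfp, hfp]; exact congrArg (fun g => deriv g p) (funext fun p' => evenF p' q)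
  -- the key explicit formula for fp
  have hgkey : ∀ q, θ (q - x - p) ≠ 0 → θ (q + x + p) ≠ 0 →
      fp q = NumF θ p x q / (θ (q - x - p) * θ (q + x + p)) ^ 2 := by
    intro q hc hd
    rw [hfp q, show (fun p' => F p' q)
      = fun p' => θ (p' + q - x) * θ (q + x - p') / (θ (q - x - p') * θ (q + x + p'))
      from funext fun p' => hF p' q]
    exact key_formula hθdiff p x q hc hd
  -- differentiability pieces
  have dAB : Differentiable ℂ (fun q : ℂ => θ (p + q - x) * θ (q + x - p)) :=
    (hθdiff.comp (((differentiable_const p).add differentiable_id).sub_const x)).mul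
      (hθdiff.comp ((differentiable_id.add_const x).sub_const p))
  have dC : Differentiable ℂ (fun q : ℂ => θ (q - x - p)) :=
    hθdiff.comp ((differentiable_id.sub_const x).sub_const p)
  have dD : Differentiable ℂ (fun q : ℂ => θ (q + x + p)) :=
    hθdiff.comp ((differentiable_id.add_const x).add_const p)
  have hVopen : IsOpen {q : ℂ | θ (q - x - p) ≠ 0 ∧ θ (q + x + p) ≠ 0} :=
    (isOpen_compl_singleton.preimage dC.continuous).inter
      (isOpen_compl_singleton.preimage dD.continuous)
  have fpdiff : ∀ q, θ (q - x - p) ≠ 0 → θ (q + x + p) ≠ 0 → DifferentiableAt ℂ fp q := by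
    intro q hc hd
    have hev : fp =ᶠ[𝓝 q]
        (fun q' => NumF θ p x q' / (θ (q' - x - p) * θ (q' + x + p)) ^ 2) := by
      filter_upwards [hVopen.mem_nhds (⟨hc, hd⟩ :
        q ∈ {q : ℂ | θ (q - x - p) ≠ 0 ∧ θ (q + x + p) ≠ 0})] with q' hq'
      exact hgkey q' hq'.1 hq'.2
    rw [hev.differentiableAt_iff]
    exact ((NumF_diff hθdiff p x) q).div (((dC q).mul (dD q)).pow 2)
      (pow_ne_zero 2 (mul_ne_zero hc hd))
  have latArg : ∀ q : ℂ, ¬ InLattice τ (q - (x + p)) → θ (q - x - p) ≠ 0 := by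
    intro q h
    apply thNe
    rwa [show q - x - p = q - (x + p) from by ring]
  have latArg' : ∀ q : ℂ, ¬ InLattice τ (q + (x + p)) → θ (q + x + p) ≠ 0 := by
    intro q h
    apply thNe
    rwa [show q + x + p = q + (x + p) from by ring]
  -- conjunct 3
  have conj3 : ∀ q₀, (InLattice τ (q₀ - (x + p)) ∨ InLattice τ (q₀ + (x + p))) →
      ∃ h : ℂ → ℂ, AnalyticAt ℂ h q₀ ∧ h q₀ ≠ 0 ∧
        ∀ᶠ q in 𝓝[≠] q₀, fp q = h q / (q - q₀) ^ 2 := by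
    rintro q₀ (hl | hl)
    · exact poleA_lemma hθdiff hθzero hθsimple h2p h2x hsum hgkey q₀ hl
    · have hl' : InLattice τ (-q₀ - (x + p)) := by
        have := lat_neg hl
        rwa [show -(q₀ + (x + p)) = -q₀ - (x + p) from by ring] at this
      obtain ⟨h, hana, hne, hev⟩ :=
        poleA_lemma hθdiff hθzero hθsimple h2p h2x hsum hgkey (-q₀) hl'
      refine ⟨fun q => h (-q), ?_, hne, ?_⟩
      · have h1 : AnalyticAt ℂ h (-q₀) := hana
        exact h1.comp (analyticAt_id.neg)
      · have := neg_punct hev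
        rw [neg_neg] at this
        filter_upwards [this] with q hq
        rw [← evenfp q, hq]
        congr 1
        ring
  -- conjunct 4 machinery
  obtain ⟨α, β, M, hαne, hMana, hMev⟩ :=
    loc_at_s hθdiff hθzero hθsimple h2p h2x hsum hgkey (hF p)
  obtain ⟨G, hGdef⟩ : ∃ G : ℂ → ℂ, G = fun q => fp q - (α * F p q ^ 2 + β * F p q) :=
    ⟨_, rfl⟩
  have hGev : (fun q => G q) =ᶠ[𝓝[≠] (x + p)] M := by
    rw [hGdef]; exact hMev
  have per1G : ∀ q, G (q + 1) = G q := by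
    intro q; rw [hGdef]; simp only; rw [per1fp, perF1]
  have perτG : ∀ q, G (q + τ) = G q := by
    intro q; rw [hGdef]; simp only; rw [perτfp, perFτ]
  have evenG : ∀ q, G (-q) = G q := by
    intro q; rw [hGdef]; simp only; rw [evenfp, evenF]
  have perG : ∀ (m n : ℤ) (q : ℂ), G (q + ((m : ℂ) + (n : ℂ) * τ)) = G q :=
    fun m n q => per_int per1G perτG m n q
  -- local data at -(x+p)
  have hMev' : G =ᶠ[𝓝[≠] (-(x + p))] (fun q => M (-q)) := by
    have := neg_punct (z := x + p) hGev
    filter_upwards [this] with q hq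
    rw [← evenG q]
    exact hq
  have hMana' : AnalyticAt ℂ (fun q => M (-q)) (-(x + p)) := by
    have h1 : AnalyticAt ℂ M (- -(x + p)) := by rw [neg_neg]; exact hMana
    exact h1.comp (analyticAt_id.neg)
  -- translation of local data
  have locAt : ∀ (z₀ : ℂ) (M' : ℂ → ℂ), AnalyticAt ℂ M' z₀ → (G =ᶠ[𝓝[≠] z₀] M') →
      ∀ (c : ℂ), (∀ q, G (q + c) = G q) →
      AnalyticAt ℂ (fun q => M' (q - c)) (z₀ + c) ∧
        G =ᶠ[𝓝[≠] (z₀ + c)] (fun q => M' (q - c)) := by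
    intro z₀ M' hMa hME c hper
    constructor
    · have h1 : AnalyticAt ℂ (fun q : ℂ => q - c) (z₀ + c) := analyticAt_id.sub analyticAt_const
      have h2 : AnalyticAt ℂ M' (z₀ + c - c) := by
        rw [show z₀ + c - c = z₀ from by ring]; exact hMa
      exact AnalyticAt.comp (f := fun q : ℂ => q - c) h2 h1
    · have := shift_punct (c := c) hME
      filter_upwards [this] with q hq
      have : G (q - c + c) = G (q - c) := hper (q - c)
      rw [show q - c + c = q from by ring] at this
      rw [this]
      exact hq
  -- G is differentiable at good points, analytic there
  have hGana : ∀ q, θ (q - x - p) ≠ 0 → θ (q + x + p) ≠ 0 → AnalyticAt ℂ G q := by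
    intro q hc hd
    apply DifferentiableOn.analyticAt _ (hVopen.mem_nhds (⟨hc, hd⟩ :
      q ∈ {q : ℂ | θ (q - x - p) ≠ 0 ∧ θ (q + x + p) ≠ 0}))
    intro z hz
    apply DifferentiableAt.differentiableWithinAt
    rw [hGdef, show (fun q => fp q - (α * F p q ^ 2 + β * F p q))
      = fun q => fp q - (α * (θ (p + q - x) * θ (q + x - p) /
          (θ (q - x - p) * θ (q + x + p))) ^ 2 +
        β * (θ (p + q - x) * θ (q + x - p) / (θ (q - x - p) * θ (q + x + p))))
      from funext fun q => by rw [hF p q]]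
    have hFd : DifferentiableAt ℂ (fun q => θ (p + q - x) * θ (q + x - p) /
        (θ (q - x - p) * θ (q + x + p))) z :=
      (dAB z).div ((dC z).mul (dD z)) (mul_ne_zero hz.1 hz.2)
    exact (fpdiff z hz.1 hz.2).sub (((hFd.pow 2).const_mul α).add (hFd.const_mul β))
  -- local data everywhere
  have locData : ∀ z : ℂ, ∃ Mz : ℂ → ℂ, AnalyticAt ℂ Mz z ∧ G =ᶠ[𝓝[≠] z] Mz := by
    intro z
    by_cases hc : θ (z - x - p) = 0
    · obtain ⟨m, n, hmn⟩ := (hθzero _).1 hc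
      have hz : z = (x + p) + ((m : ℂ) + (n : ℂ) * τ) := by linear_combination hmn
      obtain ⟨h1, h2⟩ := locAt (x + p) M hMana hGev ((m : ℂ) + (n : ℂ) * τ) (fun q => perG m n q)
      exact ⟨_, by rwa [← hz] at h1, by rwa [← hz] at h2⟩
    · by_cases hd : θ (z + x + p) = 0
      · obtain ⟨m, n, hmn⟩ := (hθzero _).1 hd
        have hz : z = (-(x + p)) + ((m : ℂ) + (n : ℂ) * τ) := by linear_combination hmn
        obtain ⟨h1, h2⟩ := locAt (-(x + p)) _ hMana' hMev'
          ((m : ℂ) + (n : ℂ) * τ) (fun q => perG m n q)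
        exact ⟨_, by rwa [← hz] at h1, by rwa [← hz] at h2⟩
      · exact ⟨G, hGana z hc hd, Filter.EventuallyEq.rfl⟩
  -- the entire extension
  have hTdiff : ∀ z, DifferentiableAt ℂ (tildeF G) z := by
    intro z
    obtain ⟨Mz, h1, h2⟩ := locData z
    exact (tildeF_eq_of_loc h1 h2).2.2
  have hTat : ∀ (z : ℂ) (Mz : ℂ → ℂ), AnalyticAt ℂ Mz z → (G =ᶠ[𝓝[≠] z] Mz) →
      tildeF G z = Mz z := fun z Mz h1 h2 => (tildeF_eq_of_loc h1 h2).2.1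
  have hTper1 : ∀ z, tildeF G (z + 1) = tildeF G z := by
    intro z
    obtain ⟨Mz, h1, h2⟩ := locData z
    obtain ⟨h1', h2'⟩ := locAt z Mz h1 h2 1 per1G
    rw [hTat z Mz h1 h2, hTat (z + 1) _ h1' h2']
    simp
  have hTperτ : ∀ z, tildeF G (z + τ) = tildeF G z := by
    intro z
    obtain ⟨Mz, h1, h2⟩ := locData z
    obtain ⟨h1', h2'⟩ := locAt z Mz h1 h2 τ perτG
    rw [hTat z Mz h1 h2, hTat (z + τ) _ h1' h2']
    simp
  -- boundedness and Liouville
  have hTcont : Continuous (tildeF G) :=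
    continuous_iff_continuousAt.mpr fun z => (hTdiff z).continuousAt
  have hKcomp : IsCompact ((fun ab : ℝ × ℝ => ((ab.1 : ℂ) + (ab.2 : ℂ) * τ)) ''
      (Set.Icc (0:ℝ) 1 ×ˢ Set.Icc (0:ℝ) 1)) := by
    apply (isCompact_Icc.prod isCompact_Icc).image
    exact (Complex.continuous_ofReal.comp continuous_fst).add
      ((Complex.continuous_ofReal.comp continuous_snd).mul continuous_const)
  have hrange : Set.range (tildeF G) ⊆ tildeF G '' ((fun ab : ℝ × ℝ =>
      ((ab.1 : ℂ) + (ab.2 : ℂ) * τ)) '' (Set.Icc (0:ℝ) 1 ×ˢ Set.Icc (0:ℝ) 1)) := by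
    rintro w ⟨z, rfl⟩
    obtain ⟨m, n, a, b, ha, hb, hz⟩ := fund_dom (ne_of_gt hτ) z
    refine ⟨(a : ℂ) + (b : ℂ) * τ, ⟨(a, b), ⟨ha, hb⟩, rfl⟩, ?_⟩
    rw [hz]
    exact (per_int hTper1 hTperτ m n _).symm
  have hbdd : Bornology.IsBounded (Set.range (tildeF G)) :=
    ((hKcomp.image hTcont).isBounded).subset hrange
  have hconst : ∀ z, tildeF G z = tildeF G (x + p) :=
    fun z => Differentiable.apply_eq_apply_of_bounded (fun w => hTdiff w) hbdd z (x + p)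
  -- conclusion
  refine ⟨fun q => ⟨per1fp q, perτfp q⟩,
    fun q h1 h2 => fpdiff q (latArg q h1) (latArg' q h2),
    conj3, ?_⟩
  refine ⟨Polynomial.C α * Polynomial.X ^ 2 + Polynomial.C β * Polynomial.X +
    Polynomial.C (tildeF G (x + p)), Polynomial.degree_quadratic hαne, ?_⟩
  intro q h1 h2
  have hc := latArg q h1
  have hd := latArg' q h2
  have hGq : G q = tildeF G (x + p) := by
    rw [← hTat q G (hGana q hc hd) Filter.EventuallyEq.rfl]
    exact hconst q
  have e : G q = fp q - (α * F p q ^ 2 + β * F p q) := by rw [hGdef]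
  simp only [Polynomial.eval_add, Polynomial.eval_mul, Polynomial.eval_pow,
    Polynomial.eval_C, Polynomial.eval_X]
  linear_combination e.symm.trans hGq
end
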